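/- Let A be a consistent layered automaton over a finite alphabet Σ that is in normal form, centralised and safe minimal. Then for every x ≥ 2, every state p in layer x admits a central sequence. -/

import Mathlib

open scoped Classical

noncomputable section

/-! ### Infinite words and the parity condition -/

/-- The minimal value occurring infinitely often in a sequence of priorities;
for (eventually) bounded sequences this is the `liminf`. -/
def minInfOften (pi : ℕ → ℕ) : ℕ := sInf {x : ℕ | ∀ N : ℕ, ∃ n : ℕ, N ≤ n ∧ pi n = x}

/-- The (min-)parity acceptance condition: the liminf of the priorities is even. -/
def ParityAccept (pi : ℕ → ℕ) : Prop := Even (minInfOften pi)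

/-- Prepend a finite word to an infinite word. -/
def prependW {α : Type} (u : List α) (w : ℕ → α) : ℕ → α := fun i =>
  if h : i < u.length then u.get ⟨i, h⟩ else w (i - u.length)

/-- The prefix of length `n` of an infinite word, as a list. -/
def wordPrefix {α : Type} (w : ℕ → α) (n : ℕ) : List α := List.ofFn (fun i : Fin n => w i)

/-- Drop the first `n` letters of an infinite word. -/
def wordDrop {α : Type} (w : ℕ → α) (n : ℕ) : ℕ → α := fun i => w (n + i)

/-- The periodic infinite word `v^ω` (junk if `v = []`). -/
def perWord {α : Type} [Inhabited α] (v : List α) : ℕ → α := fun i => v.getD (i % v.length) default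

/-! ### Layered automata -/

/-- A layered automaton over the alphabet `α` with `d` layers.  The (disjoint) layers
are encoded by the function `layer : Q → [1,d]`; each layer is a deterministic
transition system (partial transition function `δ`, which stays inside the layer);
`μ` sends each state of layer `x+1` to its parent in layer `x` (and is the identity
on layer `1`) and is a morphism of transition systems; layer `1` is complete, carries
the initial state, and all its states are reachable from the initial state. -/
structure Layered (Q α : Type) (d : ℕ) where
  layer : Q → ℕ
  layer_pos : ∀ q, 1 ≤ layer q
  layer_le : ∀ q, layer q ≤ d
  δ : Q → α → Option Q
  δ_layer : ∀ q a q', δ q a = some q' → layer q' = layer q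
  μ : Q → Q
  μ_layer : ∀ q, 1 < layer q → layer (μ q) + 1 = layer q
  μ_id : ∀ q, layer q = 1 → μ q = q
  μ_morph : ∀ q a q', 1 < layer q → δ q a = some q' → δ (μ q) a = some (μ q')
  init : Q
  init_layer : layer init = 1
  complete1 : ∀ q a, layer q = 1 → (δ q a).isSome = true
  reach1 : ∀ q, layer q = 1 →
    Relation.ReflTransGen (fun p p' => layer p = 1 ∧ ∃ a, δ p a = some p') init q

namespace Layered

variable {Q R α : Type} {d d' : ℕ}

/-- The run of the (deterministic) layer transition systems on a finite word. -/
def runList (A : Layered Q α d) : Q → List α → Option Q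
  | q, [] => some q
  | q, a :: u =>
    match A.δ q a with
    | some q' => runList A q' u
    | none => none

/-- `μ̂_x q`: the ancestor of `q` in layer `x` (image under the composed morphisms). -/
def muHat (A : Layered Q α d) (x : ℕ) (q : Q) : Q := (A.μ)^[A.layer q - x] q

/-- A leaf state: a state that is not in the image of any of the morphisms `μ_x`. -/
def IsLeaf (A : Layered Q α d) (q : Q) : Prop := ∀ p, 1 < A.layer p → A.μ p ≠ q

/-- `layer(q,a)`: the largest layer `x ≤ layer q` in which `δ_x (μ̂_x q) a` is defined. -/
def layerOf (A : Layered Q α d) (q : Q) (a : α) : ℕ :=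
  Nat.findGreatest (fun x => (A.δ (A.muHat x q) a).isSome = true) (A.layer q)

/-- A state `p` is an ancestor of `q`. -/
def IsAncestor (A : Layered Q α d) (p q : Q) : Prop :=
  A.layer p ≤ A.layer q ∧ A.muHat (A.layer p) q = p

/-! #### Safe languages and strong acceptance -/

/-- Membership of a finite word in the `x`-safe language of `q`. -/
def SafeFin (A : Layered Q α d) (x : ℕ) (q : Q) (u : List α) : Prop :=
  (A.runList (A.muHat x q) u).isSome = true

/-- Membership of an infinite word in the `x`-safe language of `q`. -/
def SafeInf (A : Layered Q α d) (x : ℕ) (q : Q) (w : ℕ → α) : Prop :=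
  ∀ n : ℕ, A.SafeFin x q (wordPrefix w n)

/-- `w` is strongly accepted by the state `p` (which lies in the even layer `x = layer p`):
`w` is `x`-safe from `p` and no decomposition `w = u·w'` admits a state `p'` of layer `x+1`
with a `u`-run from `p` to the parent of `p'` in `T_x` such that `w'` is `(x+1)`-safe from `p'`. -/
def StronglyAcc (A : Layered Q α d) (p : Q) (w : ℕ → α) : Prop :=
  Even (A.layer p) ∧ A.SafeInf (A.layer p) p w ∧
  ∀ (n : ℕ) (p' : Q), A.layer p' = A.layer p + 1 →
    A.runList p (wordPrefix w n) = some (A.μ p') →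
    ¬ A.SafeInf (A.layer p') p' (wordDrop w n)

/-- `w` is strongly rejected by `p` (lying in an odd layer). -/
def StronglyRej (A : Layered Q α d) (p : Q) (w : ℕ → α) : Prop :=
  Odd (A.layer p) ∧ A.SafeInf (A.layer p) p w ∧
  ∀ (n : ℕ) (p' : Q), A.layer p' = A.layer p + 1 →
    A.runList p (wordPrefix w n) = some (A.μ p') →
    ¬ A.SafeInf (A.layer p') p' (wordDrop w n)

/-- Consistency: no two states with the same layer-1 ancestor strongly accept
resp. strongly reject a common infinite word. -/
def Consistent (A : Layered Q α d) : Prop :=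
  ¬ ∃ (p p' : Q) (w : ℕ → α), A.muHat 1 p = A.muHat 1 p' ∧
      A.StronglyAcc p w ∧ A.StronglyRej p' w

/-- `w` is ultimately safe in layer `x`, for the automaton started in the
layer-1 state `q0`. -/
def UltSafeFrom (A : Layered Q α d) (q0 : Q) (x : ℕ) (w : ℕ → α) : Prop :=
  ∃ (n : ℕ) (p : Q), A.layer p = x ∧
    A.runList q0 (wordPrefix w n) = some (A.muHat 1 p) ∧
    A.SafeInf x p (wordDrop w n)

/-- Layered acceptance from `q0`: the maximal layer in which `w` is ultimately safe is even. -/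
def LayeredAcceptFrom (A : Layered Q α d) (q0 : Q) (w : ℕ → α) : Prop :=
  ∃ x : ℕ, Even x ∧ A.UltSafeFrom q0 x w ∧ ∀ y : ℕ, A.UltSafeFrom q0 y w → y ≤ x

/-- Layered rejection from `q0`: the maximal layer in which `w` is ultimately safe is odd. -/
def LayeredRejectFrom (A : Layered Q α d) (q0 : Q) (w : ℕ → α) : Prop :=
  ∃ x : ℕ, Odd x ∧ A.UltSafeFrom q0 x w ∧ ∀ y : ℕ, A.UltSafeFrom q0 y w → y ≤ x

/-! #### The semantics automaton `⟦A⟧` (a simple-by-priorities alternating parity automaton) -/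

/-- The priority of the letter `a` in the state `q` of `⟦A⟧`. -/
def semPrio (A : Layered Q α d) (q : Q) (a : α) : ℕ := A.layerOf q a

/-- The transitions of `⟦A⟧` (between leaf states): `q —a→ q'` iff, for
`x = layer(q,a)`, we have `δ_x (μ̂_x q) a = μ̂_x q'`; the transition carries priority `x`. -/
def semStep (A : Layered Q α d) (q : Q) (a : α) (q' : Q) : Prop :=
  A.IsLeaf q' ∧ A.δ (A.muHat (A.layerOf q a) q) a = some (A.muHat (A.layerOf q a) q')

/-- Runs of `⟦A⟧` over the infinite word `w`, starting in `p`. -/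
def IsSemRun (A : Layered Q α d) (w : ℕ → α) (p : Q) (ρ : ℕ → Q) : Prop :=
  ρ 0 = p ∧ ∀ i : ℕ, A.semStep (ρ i) (w i) (ρ (i + 1))

/-- The sequence of priorities produced by a run of `⟦A⟧` over `w`. -/
def runPrios (A : Layered Q α d) (w : ℕ → α) (ρ : ℕ → Q) : ℕ → ℕ :=
  fun i => A.semPrio (ρ i) (w i)

/-- A resolver for Eve in `⟦A⟧`: given the history (the finite run so far, as a list of
(state, letter) pairs), the current state and a letter of odd priority, it picks a successor. -/
def EveResolver (A : Layered Q α d) (σ : List (Q × α) → Q → α → Q) : Prop :=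
  ∀ (h : List (Q × α)) (q : Q) (a : α), Odd (A.semPrio q a) → A.semStep q a (σ h q a)

/-- A resolver for Adam in `⟦A⟧` (resolving the even-priority steps). -/
def AdamResolver (A : Layered Q α d) (τ : List (Q × α) → Q → α → Q) : Prop :=
  ∀ (h : List (Q × α)) (q : Q) (a : α), Even (A.semPrio q a) → A.semStep q a (τ h q a)

/-- A run is consistent with the Eve-resolver `σ`: every odd-priority step follows `σ`. -/
def ConsEve (A : Layered Q α d) (σ : List (Q × α) → Q → α → Q) (w : ℕ → α) (ρ : ℕ → Q) : Prop :=
  ∀ i : ℕ, Odd (A.semPrio (ρ i) (w i)) →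
    ρ (i + 1) = σ (List.ofFn fun j : Fin i => (ρ (j : ℕ), w (j : ℕ))) (ρ i) (w i)

/-- A run is consistent with the Adam-resolver `τ`: every even-priority step follows `τ`. -/
def ConsAdam (A : Layered Q α d) (τ : List (Q × α) → Q → α → Q) (w : ℕ → α) (ρ : ℕ → Q) : Prop :=
  ∀ i : ℕ, Even (A.semPrio (ρ i) (w i)) →
    ρ (i + 1) = τ (List.ofFn fun j : Fin i => (ρ (j : ℕ), w (j : ℕ))) (ρ i) (w i)

/-- Acceptance of `w` by `⟦A⟧` from the (leaf) state `p`: Eve has a winning strategy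
in the game `G(⟦A⟧,w)`, i.e. a resolver all of whose consistent runs satisfy parity. -/
def SemAccept (A : Layered Q α d) (p : Q) (w : ℕ → α) : Prop :=
  ∃ σ : List (Q × α) → Q → α → Q, A.EveResolver σ ∧
    ∀ ρ : ℕ → Q, A.IsSemRun w p ρ → A.ConsEve σ w ρ → ParityAccept (A.runPrios w ρ)

/-- Uniform semantic determinism: leaf states with the same layer-1 ancestor
recognise the same language in `⟦A⟧`. -/
def UnifSD (A : Layered Q α d) : Prop :=
  ∀ p q : Q, A.IsLeaf p → A.IsLeaf q → A.muHat 1 p = A.muHat 1 q →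
    ∀ w : ℕ → α, (A.SemAccept p w ↔ A.SemAccept q w)

/-! #### Longest suffix resolvers -/

/-- `v` is a suffix-witness to `r`: the layer of `r` has a run labelled `v` ending in `r`. -/
def suffixReaches (A : Layered Q α d) (r : Q) (v : List α) : Prop :=
  ∃ p : Q, A.layer p = A.layer r ∧ A.runList p v = some r

/-- The length of the longest suffix `v` of `u` such that the layer of `r` has a
run labelled `v` ending in `r`. -/
def longestSuffixLen (A : Layered Q α d) (u : List α) (r : Q) : ℕ :=
  Nat.findGreatest (fun k => k ≤ u.length ∧ A.suffixReaches r (u.drop (u.length - k))) u.length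

/-- A longest suffix resolver for Eve, initialised to `u0`: a valid Eve-resolver that,
at a step of odd priority `x` after having read `v`, moves to an `a`-successor `q'`
maximising the length of the longest `(x+1)`-suffix of `u0·v·a` to `μ̂_{x+1} q'`. -/
def IsLongestSuffixResolverE (A : Layered Q α d) (u0 : List α)
    (σ : List (Q × α) → Q → α → Q) : Prop :=
  A.EveResolver σ ∧
  ∀ (h : List (Q × α)) (q : Q) (a : α), Odd (A.semPrio q a) →
    ∀ q' : Q, A.semStep q a q' →
      A.longestSuffixLen (u0 ++ h.map Prod.snd ++ [a]) (A.muHat (A.semPrio q a + 1) q') ≤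
      A.longestSuffixLen (u0 ++ h.map Prod.snd ++ [a]) (A.muHat (A.semPrio q a + 1) (σ h q a))

/-- A longest suffix resolver for Adam, initialised to `u0` (symmetric, for even priorities). -/
def IsLongestSuffixResolverA (A : Layered Q α d) (u0 : List α)
    (τ : List (Q × α) → Q → α → Q) : Prop :=
  A.AdamResolver τ ∧
  ∀ (h : List (Q × α)) (q : Q) (a : α), Even (A.semPrio q a) →
    ∀ q' : Q, A.semStep q a q' →
      A.longestSuffixLen (u0 ++ h.map Prod.snd ++ [a]) (A.muHat (A.semPrio q a + 1) q') ≤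
      A.longestSuffixLen (u0 ++ h.map Prod.snd ++ [a]) (A.muHat (A.semPrio q a + 1) (τ h q a))

/-! #### The random walk on `⟦A⟧` -/

/-- The uniform step probability of the random walk of `⟦A⟧`. -/
def stepProb (A : Layered Q α d) (q : Q) (a : α) (q' : Q) : ENNReal :=
  if A.semStep q a q' then ((Nat.card {p : Q // A.semStep q a p} : ENNReal))⁻¹ else 0

/-- `m` is the Markov measure of the random walk of `⟦A⟧` over the word `w` started at `p`:
a probability measure on `ℕ → Q` whose cylinder probabilities are the products of the
uniform step probabilities. -/
def IsWalkMeasure [MeasurableSpace Q] (A : Layered Q α d) (w : ℕ → α) (p : Q)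
    (m : MeasureTheory.Measure (ℕ → Q)) : Prop :=
  MeasureTheory.IsProbabilityMeasure m ∧
  ∀ (n : ℕ) (s : Fin (n + 1) → Q),
    m {ρ : ℕ → Q | ∀ i : Fin (n + 1), ρ (i : ℕ) = s i} =
      (if s 0 = p then 1 else 0) *
        ∏ i : Fin n, A.stepProb (s i.castSucc) (w (i : ℕ)) (s i.succ)

/-! #### Normal form, centrality, safe minimality, central sequences -/

/-- Normal form: (N1) every layer `x ≥ 2` is a union of non-trivial SCCs, and
(N2) the safe language of every child is strictly smaller than that of its parent. -/
def NormalForm (A : Layered Q α d) : Prop :=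
  ∀ q : Q, 2 ≤ A.layer q →
    (∀ (u : List α) (q' : Q), A.runList q u = some q' →
      ∃ v : List α, v ≠ [] ∧ A.runList q' v = some q) ∧
    (∀ p : Q, 1 < A.layer p → A.μ p = q →
      ∃ u : List α, (A.runList q u).isSome = true ∧ A.runList p u = none)

/-- Inclusion of `x`-safe languages. -/
def SafeLE (A : Layered Q α d) (x : ℕ) (p q : Q) : Prop :=
  (∀ u : List α, A.SafeFin x p u → A.SafeFin x q u) ∧
  (∀ w : ℕ → α, A.SafeInf x p w → A.SafeInf x q w)

/-- Centralised: siblings (same parent) whose safe languages are included,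
lie in the same SCC of their layer. -/
def Centralised (A : Layered Q α d) : Prop :=
  ∀ p q : Q, 2 ≤ A.layer p → A.layer q = A.layer p →
    A.muHat (A.layer p - 1) p = A.muHat (A.layer p - 1) q →
    A.SafeLE (A.layer p) p q →
    (∃ u : List α, A.runList p u = some q) ∧ (∃ v : List α, A.runList q v = some p)

/-- `L(p) = L(q)`: all leaves above (the layer-1 ancestor of) `p` and all leaves above `q`
recognise the same language in `⟦A⟧`. -/
def LangEq1 (A : Layered Q α d) (p q : Q) : Prop :=
  ∀ l l' : Q, A.IsLeaf l → A.IsLeaf l' → A.muHat 1 l = A.muHat 1 p →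
    A.muHat 1 l' = A.muHat 1 q → ∀ w : ℕ → α, (A.SemAccept l w ↔ A.SemAccept l' w)

/-- The equivalence `p ≈_x q`: language equivalence together with equality of all
`y`-safe languages for `2 ≤ y ≤ x`. -/
def ApproxEq (A : Layered Q α d) (x : ℕ) (p q : Q) : Prop :=
  A.LangEq1 p q ∧ ∀ y : ℕ, 2 ≤ y → y ≤ x →
    ((∀ u : List α, A.SafeFin y p u ↔ A.SafeFin y q u) ∧
     (∀ w : ℕ → α, A.SafeInf y p w ↔ A.SafeInf y q w))

/-- Safe minimality: `≈_x`-equivalent states of the same layer are equal. -/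
def SafeMinimal (A : Layered Q α d) : Prop :=
  ∀ p q : Q, A.layer p = A.layer q → A.ApproxEq (A.layer p) p q → p = q

/-- `z` is a central sequence for the state `p` (of layer `x = layer p`). -/
def IsCentralSeq (A : Layered Q α d) (p : Q) (z : List α) : Prop :=
  z ≠ [] ∧ A.runList p z = some p ∧
  (∀ q : Q, A.layer q = A.layer p →
    A.muHat (A.layer p - 1) q = A.muHat (A.layer p - 1) p →
    (A.runList q z = some p ∨ A.runList q z = none)) ∧
  (∀ q' : Q, A.layer q' = A.layer p + 1 →
    A.muHat (A.layer p - 1) q' = A.muHat (A.layer p - 1) p →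
    A.runList q' z = none)

end Layered

/-! ### Morphisms of layered automata -/

/-- A morphism of layered automata. -/
structure IsLayMorphism {Q R α : Type} {d d' : ℕ} (A : Layered Q α d) (B : Layered R α d')
    (φ : Q → R) : Prop where
  map_init : φ A.init = B.init
  map_step : ∀ q a q', A.δ q a = some q' → B.δ (φ q) a = some (φ q')
  map_anc : ∀ p q, A.IsAncestor p q → B.IsAncestor (φ p) (φ q)

/-- A strong morphism of layered automata additionally preserves non-transitions. -/
def IsStrongLayMorphism {Q R α : Type} {d d' : ℕ} (A : Layered Q α d) (B : Layered R α d')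
    (φ : Q → R) : Prop :=
  IsLayMorphism A B φ ∧ ∀ q a, A.δ q a = none → B.δ (φ q) a = none

/-- An isomorphism of layered automata: a bijection on states that restricts to
isomorphisms of the layer transition systems, preserves the initial state, and
commutes with the morphisms `μ`. -/
structure IsLayIso {Q R α : Type} {d d' : ℕ} (A : Layered Q α d) (B : Layered R α d')
    (φ : Q ≃ R) : Prop where
  map_layer : ∀ q, B.layer (φ q) = A.layer q
  map_init : φ A.init = B.init
  map_mu : ∀ q, φ (A.μ q) = B.μ (φ q)
  map_step : ∀ q a, (A.δ q a).map φ = B.δ (φ q) a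

/-- `L(⟦A⟧) = L(⟦B⟧)`: the semantics automata (with any choice of initial leaf states
above the respective initial states) accept the same infinite words. -/
def SemLangEq {Q R α : Type} {d d' : ℕ} (A : Layered Q α d) (B : Layered R α d') : Prop :=
  ∀ (p : Q) (q : R), A.IsLeaf p → A.muHat 1 p = A.init → B.IsLeaf q → B.muHat 1 q = B.init →
    ∀ w : ℕ → α, (A.SemAccept p w ↔ B.SemAccept q w)

/-! ### Deterministic parity automata -/

/-- A deterministic parity automaton over `α` with priorities in `[1,d]`. -/
structure DPA (Q α : Type) (d : ℕ) where
  init : Q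
  next : Q → α → Q
  prio : Q → α → ℕ
  prio_pos : ∀ q a, 1 ≤ prio q a
  prio_le : ∀ q a, prio q a ≤ d

namespace DPA

variable {Q α : Type} {d : ℕ}

/-- The unique run of a DPA on an infinite word. -/
def run (B : DPA Q α d) (w : ℕ → α) : ℕ → Q
  | 0 => B.init
  | n + 1 => B.next (run B w n) (w n)

/-- Acceptance by a DPA: the priorities along the unique run satisfy parity. -/
def Accepts (B : DPA Q α d) (w : ℕ → α) : Prop :=
  ParityAccept (fun i => B.prio (B.run w i) (w i))

end DPA

/-- `L` is ω-regular: recognised by some deterministic parity automaton. -/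
def IsOmegaRegular {α : Type} (L : Set (ℕ → α)) : Prop :=
  ∃ (n d : ℕ) (B : DPA (Fin n) α d), ∀ w : ℕ → α, w ∈ L ↔ B.Accepts w

/-! ### Nondeterministic coBüchi automata -/

/-- A (complete) nondeterministic coBüchi automaton: transitions carry priorities in `{1,2}`. -/
structure NCA (Q α : Type) where
  init : Q
  trans : Q → α → ℕ → Q → Prop
  prio_mem : ∀ q a x q', trans q a x q' → x = 1 ∨ x = 2
  complete : ∀ q a, ∃ x q', trans q a x q'

namespace NCA

variable {Q α : Type}

/-- Nondeterministic acceptance from the state `q`. -/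
def AcceptFrom (B : NCA Q α) (q : Q) (w : ℕ → α) : Prop :=
  ∃ (ρ : ℕ → Q) (pri : ℕ → ℕ), ρ 0 = q ∧
    (∀ i : ℕ, B.trans (ρ i) (w i) (pri i) (ρ (i + 1))) ∧ ParityAccept pri

/-- Semantic determinism: every `a`-successor of `p` recognises `a⁻¹ L(p)`. -/
def SemDet (B : NCA Q α) : Prop :=
  ∀ p a x q, B.trans p a x q →
    ∀ w : ℕ → α, (B.AcceptFrom q w ↔ B.AcceptFrom p (prependW [a] w))

/-- Safe determinism: all `a`-transitions from a state carry the same priority, and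
there is at most one `a`-transition of priority `2` from each state. -/
def SafeDet (B : NCA Q α) : Prop :=
  (∀ q a x q' x' q'', B.trans q a x q' → B.trans q a x' q'' → x = x') ∧
  (∀ q a q' q'', B.trans q a 2 q' → B.trans q a 2 q'' → q' = q'')

/-- 1-saturation: priority-1 transitions go to all language-equivalent states. -/
def OneSaturated (B : NCA Q α) : Prop :=
  ∀ q a p p', B.trans q a 1 p →
    (∀ w : ℕ → α, (B.AcceptFrom p' w ↔ B.AcceptFrom p w)) → B.trans q a 1 p'

end NCA

/-! ### Simple-by-priorities alternating parity automata (abstract) -/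

/-- A simple-by-priorities alternating parity automaton: a complete transition system
over `α × [1,d]` in which all `a`-transitions from a state carry the same priority. -/
structure SPA (Q α : Type) (d : ℕ) where
  init : Q
  step : Q → α → Q → Prop
  prio : Q → α → ℕ
  prio_pos : ∀ q a, 1 ≤ prio q a
  prio_le : ∀ q a, prio q a ≤ d
  complete : ∀ q a, ∃ q', step q a q'

/-! ### The congruence on tuples of finite words -/

/-- The data of the congruence at one level (tuples of a fixed length,
represented as reversed lists of components: the head is the last component). -/
structure CongrLevel (α : Type) where
  bot : List (List α) → Prop
  eq : List (List α) → List (List α) → Prop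
  ptd : List (List α) → Prop

/-- Concatenate a finite word to the last component of a tuple
(tuples are represented as reversed lists: the head is the last component). -/
def tcat {α : Type} (t : List (List α)) (v : List α) : List (List α) :=
  match t with
  | h :: rest => (h ++ v) :: rest
  | [] => []

/-- Merge the last two components of a tuple. -/
def tmerge {α : Type} (t : List (List α)) : List (List α) :=
  match t with
  | u' :: h :: rest => (h ++ u') :: rest
  | t' => t'

/-- The congruence data at level `n` (handling tuples of length `n+1`), defined by
recursion on the level, following the inductive definition of `≈ ⊥`, `≈` and `pointed`. -/
def congrData {α : Type} [Inhabited α] (L : Set (ℕ → α)) : ℕ → CongrLevel α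
  | 0 =>
    { bot := fun _ => False
      eq := fun t s =>
        match t, s with
        | [u], [v] => ∀ w : ℕ → α, (prependW u w ∈ L ↔ prependW v w ∈ L)
        | _, _ => False
      ptd := fun _ => True }
  | n + 1 =>
    let C := congrData L n
    let bot : List (List α) → Prop := fun t =>
      match t with
      | u' :: ubar =>
        C.bot (tmerge (u' :: ubar)) ∨
        ∀ w : List α, w ≠ [] → C.eq (tcat (tmerge (u' :: ubar)) w) ubar →
          ((prependW ubar.reverse.flatten (perWord (u' ++ w)) ∈ L) ↔ Even (n + 1))
      | [] => True
    let eq : List (List α) → List (List α) → Prop := fun t s =>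
      C.eq (tmerge t) (tmerge s) ∧ ∀ v : List α, (bot (tcat t v) ↔ bot (tcat s v))
    let ptd : List (List α) → Prop := fun t =>
      match t with
      | u' :: ubar =>
        ¬ bot (u' :: ubar) ∧ C.ptd ubar ∧
        ∀ (vbar : List (List α)) (v' : List α), vbar.length = n + 1 → C.ptd vbar →
          C.eq (tcat vbar v') ubar → ¬ bot ((v' ++ u') :: vbar) →
          eq ((v' ++ u') :: vbar) (u' :: ubar)
      | [] => False
    { bot := bot, eq := eq, ptd := ptd }

/-- `t ≈ ⊥` (for a nonempty tuple `t`, in reversed representation). -/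
def TupBot {α : Type} [Inhabited α] (L : Set (ℕ → α)) (t : List (List α)) : Prop :=
  (congrData L (t.length - 1)).bot t

/-- `t ≈ s` (for nonempty tuples of the same length, in reversed representation). -/
def TupEq {α : Type} [Inhabited α] (L : Set (ℕ → α)) (t s : List (List α)) : Prop :=
  t.length = s.length ∧ (congrData L (t.length - 1)).eq t s

/-- `t` is pointed. -/
def TupPointed {α : Type} [Inhabited α] (L : Set (ℕ → α)) (t : List (List α)) : Prop :=
  (congrData L (t.length - 1)).ptd t

/-- `cls` exhibits `A` as (a copy of) the congruence automaton `A_≈` of `L`: its states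
are the `≈`-classes of pointed tuples (the layer being the tuple length), transitions
are given by concatenation in the last component, the initial state is the class of
`(ε)`, and the morphisms are given by merging the last two components. -/
structure IsCongrAut {α : Type} [Inhabited α] (L : Set (ℕ → α)) {Q : Type} {d : ℕ}
    (A : Layered Q α d) (cls : (t : List (List α)) → TupPointed L t → Q) : Prop where
  surj : ∀ q : Q, ∃ (t : List (List α)) (ht : TupPointed L t), cls t ht = q
  cls_eq : ∀ t ht s hs, cls t ht = cls s hs ↔ TupEq L t s
  layer_eq : ∀ t ht, A.layer (cls t ht) = t.length
  init_eq : ∀ h : TupPointed L [([] : List α)], cls [([] : List α)] h = A.init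
  step_some : ∀ t ht (a : α) (h' : TupPointed L (tcat t [a])),
    A.δ (cls t ht) a = some (cls (tcat t [a]) h')
  step_none : ∀ t ht (a : α), TupBot L (tcat t [a]) → A.δ (cls t ht) a = none
  mu_eq : ∀ (u' : List α) (ubar : List (List α)) (h : TupPointed L (u' :: ubar))
    (h' : TupPointed L (tmerge (u' :: ubar))), ubar ≠ [] →
    A.μ (cls (u' :: ubar) h) = cls (tmerge (u' :: ubar)) h'

end
/-! ### Auxiliary development for Statement 12 -/

noncomputable section Aux12

namespace Layered

variable {Q α : Type} {d : ℕ}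

lemma runList_append (A : Layered Q α d) (u v : List α) :
    ∀ q : Q, A.runList q (u ++ v) = (A.runList q u).bind (fun t => A.runList t v) := by
  induction u with
  | nil => intro q; simp [runList]
  | cons a u ih =>
    intro q
    rw [List.cons_append]
    cases h : A.δ q a with
    | none => simp [runList, h]
    | some q' => simp [runList, h, ih q']

lemma runList_singleton (A : Layered Q α d) (q : Q) (a : α) :
    A.runList q [a] = A.δ q a := by
  cases h : A.δ q a <;> simp [runList, h]

lemma runList_layer (A : Layered Q α d) :
    ∀ (u : List α) (q q' : Q), A.runList q u = some q' → A.layer q' = A.layer q := by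
  intro u
  induction u with
  | nil => intro q q' h; simp [runList] at h; rw [h]
  | cons a u ih =>
    intro q q' h
    cases hd : A.δ q a with
    | none => simp [runList, hd] at h
    | some t =>
      simp [runList, hd] at h
      rw [ih t q' h, A.δ_layer q a t hd]

lemma layer_iterate_mu (A : Layered Q α d) :
    ∀ (n : ℕ) (q : Q), n + 1 ≤ A.layer q → A.layer ((A.μ)^[n] q) = A.layer q - n := by
  intro n
  induction n with
  | zero => intro q _; simp
  | succ n ih =>
    intro q h
    rw [Function.iterate_succ_apply']
    have h1 : A.layer ((A.μ)^[n] q) = A.layer q - n := ih q (by omega)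
    have h2 : 1 < A.layer ((A.μ)^[n] q) := by omega
    have := A.μ_layer _ h2
    omega

lemma muHat_layer (A : Layered Q α d) {x : ℕ} {q : Q} (hx1 : 1 ≤ x) (hxq : x ≤ A.layer q) :
    A.layer (A.muHat x q) = x := by
  unfold muHat
  rw [A.layer_iterate_mu (A.layer q - x) q (by omega)]
  omega

lemma muHat_self (A : Layered Q α d) (q : Q) : A.muHat (A.layer q) q = q := by
  unfold muHat; simp

lemma muHat_eq_self_of_le (A : Layered Q α d) {x : ℕ} {q : Q} (h : A.layer q ≤ x) :
    A.muHat x q = q := by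
  unfold muHat; rw [Nat.sub_eq_zero_of_le h]; rfl

lemma muHat_layer_self (A : Layered Q α d) {x : ℕ} {q : Q} (h : A.layer q = x) :
    A.muHat x q = q := by
  rw [← h]; exact A.muHat_self q

lemma muHat_muHat (A : Layered Q α d) {x y : ℕ} {q : Q} (hx1 : 1 ≤ x) (hxy : x ≤ y)
    (hyq : y ≤ A.layer q) : A.muHat x (A.muHat y q) = A.muHat x q := by
  have h1 : A.layer (A.muHat y q) = y := A.muHat_layer (by omega) hyq
  show (A.μ)^[A.layer (A.muHat y q) - x] (A.muHat y q) = _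
  rw [h1]
  unfold muHat
  rw [← Function.iterate_add_apply]
  congr 1
  omega

lemma muHat_succ_self (A : Layered Q α d) {x : ℕ} {q : Q} (h : A.layer q = x + 1) :
    A.muHat x q = A.μ q := by
  unfold muHat
  rw [h, show x + 1 - x = 1 by omega]
  rfl

lemma step_iterate (A : Layered Q α d) {q q' : Q} {a : α} (h : A.δ q a = some q') :
    ∀ n, n + 1 ≤ A.layer q → A.δ ((A.μ)^[n] q) a = some ((A.μ)^[n] q') := by
  intro n
  induction n with
  | zero => intro _; simpa using h
  | succ n ih =>
    intro h2
    have ih' := ih (by omega)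
    rw [Function.iterate_succ_apply', Function.iterate_succ_apply']
    refine A.μ_morph _ a _ ?_ ih'
    rw [A.layer_iterate_mu n q (by omega)]
    omega

lemma δ_muHat (A : Layered Q α d) {q q' : Q} {a : α} (h : A.δ q a = some q') {x : ℕ}
    (hx1 : 1 ≤ x) (hxq : x ≤ A.layer q) :
    A.δ (A.muHat x q) a = some (A.muHat x q') := by
  have hl : A.layer q' = A.layer q := A.δ_layer _ _ _ h
  unfold muHat
  rw [hl]
  exact A.step_iterate h _ (by omega)

lemma runList_muHat (A : Layered Q α d) {x : ℕ} (hx1 : 1 ≤ x) :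
    ∀ (u : List α) (q q' : Q), A.runList q u = some q' → x ≤ A.layer q →
      A.runList (A.muHat x q) u = some (A.muHat x q') := by
  intro u
  induction u with
  | nil => intro q q' h _; simp [runList] at h ⊢; rw [h]
  | cons a u ih =>
    intro q q' h hx
    cases hd : A.δ q a with
    | none => simp [runList, hd] at h
    | some t =>
      simp [runList, hd] at h
      have hstep := A.δ_muHat hd hx1 hx
      have hlt : x ≤ A.layer t := by rw [A.δ_layer q a t hd]; exact hx
      simp [runList, hstep]
      exact ih t q' h hlt

lemma muHat_mu (A : Layered Q α d) {q : Q} {x : ℕ} (h1 : 1 < A.layer q) (hx1 : 1 ≤ x)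
    (hx : x ≤ A.layer q - 1) : A.muHat x (A.μ q) = A.muHat x q := by
  have hμ : A.layer (A.μ q) + 1 = A.layer q := A.μ_layer q h1
  obtain ⟨k, hk⟩ : ∃ k, A.layer (A.μ q) - x = k := ⟨_, rfl⟩
  have e2 : A.layer q - x = k + 1 := by omega
  show (A.μ)^[A.layer (A.μ q) - x] (A.μ q) = (A.μ)^[A.layer q - x] q
  rw [hk, e2, Function.iterate_succ_apply]

end Layered
namespace Layered

variable {Q α : Type} {d : ℕ}

lemma exists_leaf_above (A : Layered Q α d) :
    ∀ (k : ℕ) (s : Q), d - A.layer s ≤ k →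
      ∃ l, A.IsLeaf l ∧ A.layer s ≤ A.layer l ∧ A.muHat (A.layer s) l = s := by
  intro k
  induction k with
  | zero =>
    intro s hs
    refine ⟨s, ?_, le_rfl, A.muHat_self s⟩
    intro p hp hmu
    have h1 := A.μ_layer p hp
    have h2 := A.layer_le p
    have h3 := A.layer_le s
    rw [hmu] at h1
    omega
  | succ k ih =>
    intro s hs
    by_cases hL : A.IsLeaf s
    · exact ⟨s, hL, le_rfl, A.muHat_self s⟩
    · unfold IsLeaf at hL
      push_neg at hL
      obtain ⟨p, hp1, hpμ⟩ := hL
      have hlp : A.layer p = A.layer s + 1 := by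
        have := A.μ_layer p hp1; rw [hpμ] at this; omega
      have hd : d - A.layer p ≤ k := by
        have := A.layer_le p; omega
      obtain ⟨l, hl, hll, hlm⟩ := ih p hd
      refine ⟨l, hl, by omega, ?_⟩
      have hcomp : A.muHat (A.layer s) l = A.muHat (A.layer s) (A.muHat (A.layer p) l) :=
        (A.muHat_muHat (A.layer_pos s) (by omega) hll).symm
      rw [hcomp, hlm]
      have : A.muHat (A.layer s) p = A.μ p := by
        unfold muHat
        rw [show A.layer p - A.layer s = 1 by omega]
        rfl
      rw [this, hpμ]

/-- A chosen leaf above a given state. -/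
def leafAbove (A : Layered Q α d) (s : Q) : Q :=
  Classical.choose (A.exists_leaf_above (d - A.layer s) s le_rfl)

lemma leafAbove_spec (A : Layered Q α d) (s : Q) :
    A.IsLeaf (A.leafAbove s) ∧ A.layer s ≤ A.layer (A.leafAbove s) ∧
      A.muHat (A.layer s) (A.leafAbove s) = s :=
  Classical.choose_spec (A.exists_leaf_above (d - A.layer s) s le_rfl)

lemma muHat_leafAbove (A : Layered Q α d) {x : ℕ} (s : Q) (hx1 : 1 ≤ x) (hx : x ≤ A.layer s) :
    A.muHat x (A.leafAbove s) = A.muHat x s := by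
  rw [← A.muHat_muHat hx1 hx (A.leafAbove_spec s).2.1, (A.leafAbove_spec s).2.2]

lemma runList_layer1_isSome (A : Layered Q α d) :
    ∀ (u : List α) (q : Q), A.layer q = 1 → (A.runList q u).isSome := by
  intro u
  induction u with
  | nil => intro q _; simp [runList]
  | cons a u ih =>
    intro q hq
    obtain ⟨t, ht⟩ := Option.isSome_iff_exists.mp (A.complete1 q a hq)
    have hlt : A.layer t = 1 := by rw [A.δ_layer q a t ht]; exact hq
    simp [runList, ht]
    exact ih t hlt

lemma layerOf_pos (A : Layered Q α d) (q : Q) (a : α) : 1 ≤ A.layerOf q a := by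
  refine Nat.le_findGreatest (A.layer_pos q) ?_
  have h1 : A.layer (A.muHat 1 q) = 1 := A.muHat_layer le_rfl (A.layer_pos q)
  exact A.complete1 _ a h1

lemma layerOf_le (A : Layered Q α d) (q : Q) (a : α) : A.layerOf q a ≤ A.layer q :=
  Nat.findGreatest_le _

lemma layerOf_isSome (A : Layered Q α d) (q : Q) (a : α) :
    (A.δ (A.muHat (A.layerOf q a) q) a).isSome := by
  refine Nat.findGreatest_spec (P := fun x => (A.δ (A.muHat x q) a).isSome = true)
    (A.layer_pos q) ?_
  have h1 : A.layer (A.muHat 1 q) = 1 := A.muHat_layer le_rfl (A.layer_pos q)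
  exact A.complete1 _ a h1

lemma layerOf_max (A : Layered Q α d) {q : Q} {a : α} {x : ℕ} (hx : x ≤ A.layer q)
    (h : (A.δ (A.muHat x q) a).isSome) : x ≤ A.layerOf q a := by
  by_contra hlt
  push_neg at hlt
  exact absurd h (by simpa using Nat.findGreatest_is_greatest hlt hx)

lemma semStep_exists (A : Layered Q α d) (q : Q) (a : α) : ∃ q', A.semStep q a q' := by
  obtain ⟨r, hr⟩ := Option.isSome_iff_exists.mp (A.layerOf_isSome q a)
  have hlr : A.layer r = A.layerOf q a := by
    rw [A.δ_layer _ _ _ hr]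
    exact A.muHat_layer (A.layerOf_pos q a) (A.layerOf_le q a)
  obtain ⟨l, hl, hle, hm⟩ := A.exists_leaf_above (d - A.layer r) r le_rfl
  refine ⟨l, hl, ?_⟩
  rw [hr]
  congr 1
  rw [← hlr]
  exact hm.symm

lemma semStep_layer_ge (A : Layered Q α d) {q q' : Q} {a : α} (h : A.semStep q a q') :
    A.layerOf q a ≤ A.layer q' := by
  rcases h with ⟨_, hstep⟩
  have h1 : A.layer (A.muHat (A.layerOf q a) q') = A.layerOf q a := by
    rw [A.δ_layer _ _ _ hstep]
    exact A.muHat_layer (A.layerOf_pos q a) (A.layerOf_le q a)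
  by_contra hlt
  push_neg at hlt
  rw [A.muHat_eq_self_of_le (le_of_lt hlt)] at h1
  omega

lemma semStep_proj (A : Layered Q α d) {q q' : Q} {a : α} (h : A.semStep q a q') {x : ℕ}
    (hx1 : 1 ≤ x) (hx : x ≤ A.layerOf q a) :
    A.δ (A.muHat x q) a = some (A.muHat x q') := by
  have hge := A.semStep_layer_ge h
  rcases h with ⟨_, hstep⟩
  have h2 := A.δ_muHat hstep hx1
    (by rw [A.muHat_layer (A.layerOf_pos q a) (A.layerOf_le q a)]; exact hx)
  rw [A.muHat_muHat hx1 hx (A.layerOf_le q a),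
      A.muHat_muHat hx1 hx hge] at h2
  exact h2

end Layered

section Words

variable {α : Type}

lemma wordPrefix_zero (w : ℕ → α) : wordPrefix w 0 = [] := by simp [wordPrefix]

lemma wordPrefix_succ (w : ℕ → α) (n : ℕ) :
    wordPrefix w (n + 1) = wordPrefix w n ++ [w n] := by
  unfold wordPrefix
  rw [List.ofFn_succ']
  simp [List.concat_eq_append]

lemma wordDrop_apply (w : ℕ → α) (m n : ℕ) : wordDrop w m n = w (m + n) := rfl

lemma wordDrop_wordDrop (w : ℕ → α) (m n : ℕ) :
    wordDrop (wordDrop w m) n = wordDrop w (m + n) := by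
  funext i; simp [wordDrop, Nat.add_assoc]

lemma wordPrefix_add (w : ℕ → α) (m n : ℕ) :
    wordPrefix w (m + n) = wordPrefix w m ++ wordPrefix (wordDrop w m) n := by
  induction n with
  | zero => simp [wordPrefix_zero]
  | succ n ih =>
    rw [show m + (n+1) = (m+n)+1 by omega, wordPrefix_succ, ih, wordPrefix_succ,
      List.append_assoc]
    rfl

end Words
namespace Layered

variable {Q α : Type} {d : ℕ}

lemma safeFin_at_layer (A : Layered Q α d) {x : ℕ} {q : Q} (hq : A.layer q = x) (u : List α) :
    A.SafeFin x q u ↔ (A.runList q u).isSome := by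
  unfold SafeFin; rw [A.muHat_layer_self hq]

lemma safeInf_at_layer (A : Layered Q α d) {x : ℕ} {q : Q} (hq : A.layer q = x) (w : ℕ → α) :
    A.SafeInf x q w ↔ ∀ n, (A.runList q (wordPrefix w n)).isSome := by
  unfold SafeInf
  constructor <;> intro h n <;> have := h n
  · rwa [A.safeFin_at_layer hq] at this
  · rwa [A.safeFin_at_layer hq]

lemma safeInf_shift (A : Layered Q α d) {x : ℕ} {q q₂ : Q} {w' : ℕ → α} {k : ℕ}
    (hq : A.layer q = x) (hs : A.SafeInf x q w')
    (hrun : A.runList q (wordPrefix w' k) = some q₂) :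
    A.SafeInf x q₂ (wordDrop w' k) := by
  have hq₂ : A.layer q₂ = x := by rw [A.runList_layer _ _ _ hrun]; exact hq
  rw [A.safeInf_at_layer hq₂]
  intro n
  have := (A.safeInf_at_layer hq w').mp hs (k + n)
  rwa [wordPrefix_add, runList_append, hrun, Option.bind_some] at this

lemma stronglyAcc_shift (A : Layered Q α d) {p p₂ : Q} {w' : ℕ → α} {k : ℕ}
    (h : A.StronglyAcc p w') (hrun : A.runList p (wordPrefix w' k) = some p₂) :
    A.StronglyAcc p₂ (wordDrop w' k) := by
  obtain ⟨he, hs, hno⟩ := h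
  have hl : A.layer p₂ = A.layer p := A.runList_layer _ _ _ hrun
  refine ⟨by rw [hl]; exact he, by rw [hl]; exact A.safeInf_shift rfl hs hrun, ?_⟩
  intro n p' hp' hrun2
  have h2 : A.runList p (wordPrefix w' (k + n)) = some (A.μ p') := by
    rw [wordPrefix_add, runList_append, hrun, Option.bind_some]; exact hrun2
  have h3 := hno (k + n) p' (by rw [hp', hl]) h2
  rwa [wordDrop_wordDrop] 

lemma stronglyRej_shift (A : Layered Q α d) {p p₂ : Q} {w' : ℕ → α} {k : ℕ}
    (h : A.StronglyRej p w') (hrun : A.runList p (wordPrefix w' k) = some p₂) :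
    A.StronglyRej p₂ (wordDrop w' k) := by
  obtain ⟨he, hs, hno⟩ := h
  have hl : A.layer p₂ = A.layer p := A.runList_layer _ _ _ hrun
  refine ⟨by rw [hl]; exact he, by rw [hl]; exact A.safeInf_shift rfl hs hrun, ?_⟩
  intro n p' hp' hrun2
  have h2 : A.runList p (wordPrefix w' (k + n)) = some (A.μ p') := by
    rw [wordPrefix_add, runList_append, hrun, Option.bind_some]; exact hrun2
  have h3 := hno (k + n) p' (by rw [hp', hl]) h2
  rwa [wordDrop_wordDrop]

end Layered

section MinInfOften

lemma eventually_ge_of_not_infOften (pi : ℕ → ℕ) :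
    ∀ Y : ℕ, (∀ v, v < Y → ∃ N, ∀ n, N ≤ n → pi n ≠ v) →
      ∃ m, ∀ i, m ≤ i → Y ≤ pi i := by
  intro Y
  induction Y with
  | zero => intro _; exact ⟨0, fun i _ => Nat.zero_le _⟩
  | succ Y ih =>
    intro h
    obtain ⟨m₁, hm₁⟩ := ih (fun v hv => h v (by omega))
    obtain ⟨N, hN⟩ := h Y (by omega)
    refine ⟨max m₁ N, fun i hi => ?_⟩
    have h1 := hm₁ i (le_trans (le_max_left _ _) hi)
    have h2 := hN i (le_trans (le_max_right _ _) hi)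
    omega

lemma minInfOften_spec (pi : ℕ → ℕ) (D : ℕ) (hb : ∀ i, pi i ≤ D) :
    (∀ N, ∃ n, N ≤ n ∧ pi n = minInfOften pi) ∧
      (∃ m, ∀ i, m ≤ i → minInfOften pi ≤ pi i) := by
  have hne : {x : ℕ | ∀ N : ℕ, ∃ n : ℕ, N ≤ n ∧ pi n = x}.Nonempty := by
    by_contra h
    rw [Set.not_nonempty_iff_eq_empty] at h
    have h2 : ∀ v, v < D + 1 → ∃ N, ∀ n, N ≤ n → pi n ≠ v := by
      intro v _
      have : v ∉ {x : ℕ | ∀ N : ℕ, ∃ n : ℕ, N ≤ n ∧ pi n = x} := by rw [h]; exact Set.notMem_empty v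
      simp only [Set.mem_setOf_eq, not_forall] at this
      obtain ⟨N, hN⟩ := this
      push_neg at hN
      exact ⟨N, hN⟩
    obtain ⟨m, hm⟩ := eventually_ge_of_not_infOften pi (D + 1) h2
    have := hm m le_rfl
    have := hb m
    omega
  have hmem : minInfOften pi ∈ {x : ℕ | ∀ N : ℕ, ∃ n : ℕ, N ≤ n ∧ pi n = x} :=
    Nat.sInf_mem hne
  refine ⟨hmem, ?_⟩
  apply eventually_ge_of_not_infOften
  intro v hv
  have : v ∉ {x : ℕ | ∀ N : ℕ, ∃ n : ℕ, N ≤ n ∧ pi n = x} := by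
    intro hmem2
    have := Nat.sInf_le hmem2
    unfold minInfOften at hv
    omega
  simp only [Set.mem_setOf_eq, not_forall] at this
  obtain ⟨N, hN⟩ := this
  push_neg at hN
  exact ⟨N, hN⟩

end MinInfOften
namespace Layered

variable {Q α : Type} {d : ℕ}

/-- A candidate "anchor" for the greedy resolver at step `i`. -/
def anchorCand (A : Layered Q α d) (w : ℕ → α) (i : ℕ) (q : Q) (a : α) (t : Q) : Prop :=
  A.layerOf q a < A.layer t ∧
  A.δ (A.muHat (A.layerOf q a) q) a = some (A.muHat (A.layerOf q a) t) ∧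
  A.SafeInf (A.layer t) t (wordDrop w (i + 1))

/-- The greedy ("anchor whenever possible") choice of a successor. -/
def greedyPick (A : Layered Q α d) (w : ℕ → α) (i : ℕ) (q : Q) (a : α) : Q :=
  if h : ∃ t, A.anchorCand w i q a t then A.leafAbove (Classical.choose h)
  else A.leafAbove ((A.δ (A.muHat (A.layerOf q a) q) a).get (A.layerOf_isSome q a))

/-- The greedy resolver. -/
def greedy (A : Layered Q α d) (w : ℕ → α) : List (Q × α) → Q → α → Q :=
  fun h q a => A.greedyPick w h.length q a

lemma greedyPick_semStep (A : Layered Q α d) (w : ℕ → α) (i : ℕ) (q : Q) (a : α) :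
    A.semStep q a (A.greedyPick w i q a) := by
  unfold greedyPick
  split_ifs with h
  · obtain ⟨h1, h2, h3⟩ := Classical.choose_spec h
    refine ⟨(A.leafAbove_spec _).1, ?_⟩
    rw [A.muHat_leafAbove _ (A.layerOf_pos q a) (le_of_lt h1)]
    exact h2
  · set r := (A.δ (A.muHat (A.layerOf q a) q) a).get (A.layerOf_isSome q a) with hrdef
    have hr : A.δ (A.muHat (A.layerOf q a) q) a = some r := (Option.some_get _).symm
    have hlr : A.layer r = A.layerOf q a := by
      rw [A.δ_layer _ _ _ hr]
      exact A.muHat_layer (A.layerOf_pos q a) (A.layerOf_le q a)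
    refine ⟨(A.leafAbove_spec _).1, ?_⟩
    rw [show A.muHat (A.layerOf q a) (A.leafAbove r) = r by
      conv_lhs => rw [← hlr]
      exact (A.leafAbove_spec r).2.2]
    exact hr

lemma greedyPick_anchor (A : Layered Q α d) (w : ℕ → α) (i : ℕ) (q : Q) (a : α)
    (h : ∃ t, A.anchorCand w i q a t) :
    ∃ t, A.anchorCand w i q a t ∧ A.muHat (A.layer t) (A.greedyPick w i q a) = t ∧
      A.layer t ≤ A.layer (A.greedyPick w i q a) := by
  refine ⟨Classical.choose h, Classical.choose_spec h, ?_, ?_⟩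
  · unfold greedyPick; rw [dif_pos h]; exact (A.leafAbove_spec _).2.2
  · unfold greedyPick; rw [dif_pos h]; exact (A.leafAbove_spec _).2.1

section RunAnalysis

variable (A : Layered Q α d) (w : ℕ → α) (ρ : ℕ → Q)

lemma run_base (hsr : ∀ i, A.semStep (ρ i) (w i) (ρ (i + 1))) :
    ∀ i, A.runList (A.muHat 1 (ρ 0)) (wordPrefix w i) = some (A.muHat 1 (ρ i)) := by
  intro i
  induction i with
  | zero => rw [wordPrefix_zero]; rfl
  | succ i ih =>
    rw [wordPrefix_succ, runList_append, ih, Option.bind_some]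
    have hst := A.semStep_proj (hsr i) le_rfl (A.layerOf_pos _ _)
    rw [runList_singleton, hst]

lemma run_track (hsr : ∀ i, A.semStep (ρ i) (w i) (ρ (i + 1))) {x : ℕ} (m : ℕ) (hx1 : 1 ≤ x)
    (hpr : ∀ j, m ≤ j → x ≤ A.layerOf (ρ j) (w j)) :
    ∀ n, A.runList (A.muHat x (ρ m)) (wordPrefix (wordDrop w m) n) =
      some (A.muHat x (ρ (m + n))) := by
  intro n
  induction n with
  | zero => rw [wordPrefix_zero]; rfl
  | succ n ih =>
    rw [wordPrefix_succ, runList_append, ih, Option.bind_some]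
    have hst := A.semStep_proj (hsr (m + n)) hx1 (hpr (m + n) (Nat.le_add_right m n))
    rw [runList_singleton, wordDrop_apply, show m + (n + 1) = (m + n) + 1 by omega]
    exact hst

lemma anchored_priorities (hsr : ∀ i, A.semStep (ρ i) (w i) (ρ (i + 1))) (t₀ : Q) (i₀ : ℕ)
    (h1 : A.muHat (A.layer t₀) (ρ i₀) = t₀) (h2 : A.layer t₀ ≤ A.layer (ρ i₀))
    (h3 : A.SafeInf (A.layer t₀) t₀ (wordDrop w i₀)) :
    ∀ j, i₀ ≤ j → A.layer t₀ ≤ A.layerOf (ρ j) (w j) := by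
  have hz1 : 1 ≤ A.layer t₀ := A.layer_pos t₀
  have hsome : ∀ n, (A.runList t₀ (wordPrefix (wordDrop w i₀) n)).isSome :=
    (A.safeInf_at_layer rfl _).mp h3
  have hsucc : ∀ n tn, A.runList t₀ (wordPrefix (wordDrop w i₀) n) = some tn →
      ∃ t', A.δ tn (w (i₀ + n)) = some t' ∧
        A.runList t₀ (wordPrefix (wordDrop w i₀) (n + 1)) = some t' := by
    intro n tn htn
    obtain ⟨t', ht'⟩ := Option.isSome_iff_exists.mp (hsome (n + 1))
    have h5 := ht'
    rw [wordPrefix_succ, runList_append, htn, Option.bind_some, runList_singleton,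
      wordDrop_apply] at h5
    exact ⟨t', h5, ht'⟩
  suffices h : ∀ n, ∃ tn, A.runList t₀ (wordPrefix (wordDrop w i₀) n) = some tn ∧
      A.muHat (A.layer t₀) (ρ (i₀ + n)) = tn ∧ A.layer t₀ ≤ A.layer (ρ (i₀ + n)) ∧
      A.layer t₀ ≤ A.layerOf (ρ (i₀ + n)) (w (i₀ + n)) by
    intro j hj
    obtain ⟨n, rfl⟩ := Nat.exists_eq_add_of_le hj
    obtain ⟨tn, -, -, -, h4⟩ := h n
    exact h4
  intro n
  induction n with
  | zero =>
    have hrun0 : A.runList t₀ (wordPrefix (wordDrop w i₀) 0) = some t₀ := by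
      rw [wordPrefix_zero]; rfl
    have hmu0 : A.muHat (A.layer t₀) (ρ (i₀ + 0)) = t₀ := h1
    have hlay0 : A.layer t₀ ≤ A.layer (ρ (i₀ + 0)) := h2
    refine ⟨t₀, hrun0, hmu0, hlay0, ?_⟩
    obtain ⟨t', ht', -⟩ := hsucc 0 t₀ hrun0
    refine A.layerOf_max hlay0 ?_
    rw [hmu0, ht']
    rfl
  | succ n ih =>
    obtain ⟨tn, htn, hmu, hlay, hpr⟩ := ih
    obtain ⟨t', hδ, ht'⟩ := hsucc n tn htn
    have hproj := A.semStep_proj (hsr (i₀ + n)) hz1 hpr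
    rw [hmu, hδ] at hproj
    have hmu' : A.muHat (A.layer t₀) (ρ (i₀ + n + 1)) = t' := (Option.some_inj.mp hproj).symm
    have hlay' : A.layer t₀ ≤ A.layer (ρ (i₀ + n + 1)) :=
      le_trans hpr (A.semStep_layer_ge (hsr (i₀ + n)))
    refine ⟨t', ht', hmu', hlay', ?_⟩
    obtain ⟨t'', hδ'', -⟩ := hsucc (n + 1) t' ht'
    have hδ3 : A.δ t' (w (i₀ + n + 1)) = some t'' := hδ''
    refine A.layerOf_max hlay' ?_
    show (A.δ (A.muHat (A.layer t₀) (ρ (i₀ + n + 1))) (w (i₀ + n + 1))).isSome = true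
    rw [hmu', hδ3]
    rfl

end RunAnalysis

end Layered
namespace Layered

variable {Q α : Type} {d : ℕ}

lemma greedy_strongfact (A : Layered Q α d) (w : ℕ → α) (ρ : ℕ → Q) (par : ℕ → Prop)
    (hsr : ∀ i, A.semStep (ρ i) (w i) (ρ (i + 1)))
    (hgr : ∀ i, par (A.layerOf (ρ i) (w i)) → (∃ t, A.anchorCand w i (ρ i) (w i) t) →
      ∃ t, A.anchorCand w i (ρ i) (w i) t ∧ A.muHat (A.layer t) (ρ (i + 1)) = t ∧
        A.layer t ≤ A.layer (ρ (i + 1)))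
    (hY : par (minInfOften (A.runPrios w ρ))) :
    ∃ (m : ℕ) (qh : Q), A.layer qh = minInfOften (A.runPrios w ρ) ∧
      A.runList (A.muHat 1 (ρ 0)) (wordPrefix w m) = some (A.muHat 1 qh) ∧
      A.SafeInf (A.layer qh) qh (wordDrop w m) ∧
      (∀ n p', A.layer p' = A.layer qh + 1 →
        A.runList qh (wordPrefix (wordDrop w m) n) = some (A.μ p') →
        ¬ A.SafeInf (A.layer p') p' (wordDrop w (m + n))) := by
  set Y := minInfOften (A.runPrios w ρ) with hYdef
  have hbd : ∀ i, A.runPrios w ρ i ≤ d := fun i => le_trans (A.layerOf_le _ _) (A.layer_le _)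
  obtain ⟨hinf, m, hm⟩ := minInfOften_spec (A.runPrios w ρ) d hbd
  have hpi : ∀ i, A.runPrios w ρ i = A.layerOf (ρ i) (w i) := fun _ => rfl
  have hY1 : 1 ≤ Y := by
    obtain ⟨n, -, hn⟩ := hinf 0
    rw [hYdef, ← hn, hpi]; exact A.layerOf_pos _ _
  have hYlay : Y ≤ A.layer (ρ m) := le_trans (hm m le_rfl) (A.layerOf_le _ _)
  set qh := A.muHat Y (ρ m) with hqhdef
  have hql : A.layer qh = Y := A.muHat_layer hY1 hYlay
  have htrack := A.run_track w ρ hsr m hY1 (fun j hj => hm j hj)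
  refine ⟨m, qh, hql, ?_, ?_, ?_⟩
  · rw [show A.muHat 1 qh = A.muHat 1 (ρ m) from A.muHat_muHat le_rfl hY1 hYlay]
    exact A.run_base w ρ hsr m
  · rw [A.safeInf_at_layer rfl]
    intro n
    rw [htrack n]
    rfl
  · intro n p' hp' hrun hsafe
    obtain ⟨i, hi, hpiY⟩ := hinf (m + n)
    obtain ⟨k, hk⟩ := Nat.exists_eq_add_of_le hi
    have hYi : A.layerOf (ρ i) (w i) = Y := by rw [← hpi]; exact hpiY
    have hp'' : A.layer p' = Y + 1 := by rw [hp', hql]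
    have hp'some : ∀ j, (A.runList p' (wordPrefix (wordDrop w (m + n)) j)).isSome :=
      (A.safeInf_at_layer rfl _).mp hsafe
    obtain ⟨ti, hti⟩ := Option.isSome_iff_exists.mp (hp'some k)
    obtain ⟨tsucc, htsucc⟩ := Option.isSome_iff_exists.mp (hp'some (k + 1))
    have hstep : A.δ ti (w i) = some tsucc := by
      have h5 := htsucc
      rw [wordPrefix_succ, runList_append, hti, Option.bind_some, runList_singleton,
        wordDrop_apply, ← hk] at h5
      exact h5
    have hlti : A.layer ti = Y + 1 := by rw [A.runList_layer _ _ _ hti]; exact hp''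
    have hltsucc : A.layer tsucc = Y + 1 := by rw [A.δ_layer _ _ _ hstep]; exact hlti
    -- identify the layer-Y ancestor of ρ i
    have hμti : A.muHat Y (ρ i) = A.μ ti := by
      have h6 := htrack (n + k)
      rw [show m + (n + k) = i by omega] at h6
      have h7 : wordPrefix (wordDrop w m) (n + k) =
          wordPrefix (wordDrop w m) n ++ wordPrefix (wordDrop w (m + n)) k := by
        rw [wordPrefix_add, wordDrop_wordDrop]
      rw [h7, runList_append, hrun, Option.bind_some] at h6
      have h8 := A.runList_muHat hY1 _ _ _ hti (by omega)
      rw [A.muHat_succ_self hp'', A.muHat_succ_self hlti] at h8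
      rw [h8] at h6
      exact (Option.some_inj.mp h6).symm
    have hanch : A.anchorCand w i (ρ i) (w i) tsucc := by
      refine ⟨by rw [hYi, hltsucc]; omega, ?_, ?_⟩
      · rw [hYi, hμti, A.muHat_succ_self hltsucc]
        have h9 := A.δ_muHat hstep hY1 (by omega)
        rwa [A.muHat_succ_self hlti, A.muHat_succ_self hltsucc] at h9
      · have h10 := A.safeInf_shift rfl hsafe htsucc
        rw [wordDrop_wordDrop, show m + n + (k + 1) = i + 1 by omega] at h10
        rw [show A.layer tsucc = A.layer p' by omega]
        exact h10
    obtain ⟨t', hc', hmu', hle'⟩ := hgr i (by rw [hYi]; exact hY) ⟨tsucc, hanch⟩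
    have hall := A.anchored_priorities w ρ hsr t' (i + 1) hmu' hle' hc'.2.2
    obtain ⟨j, hj, hpj⟩ := hinf (i + 1)
    have hj1 := hall j hj
    have hj2 : A.layerOf (ρ j) (w j) = Y := by rw [← hpi]; exact hpj
    have hj3 : Y < A.layer t' := by have := hc'.1; rwa [hYi] at this
    omega

end Layered
namespace Layered

variable {Q α : Type} {d : ℕ}

lemma wordDrop_any (w : ℕ → α) (n : ℕ) : True := trivial

lemma ultSafe_one (A : Layered Q α d) (c : Q) (hc : A.layer c = 1) (w : ℕ → α) :
    A.UltSafeFrom c 1 w := by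
  refine ⟨0, c, hc, ?_, ?_⟩
  · rw [wordPrefix_zero, A.muHat_layer_self hc]; rfl
  · rw [A.safeInf_at_layer hc]
    intro n
    exact A.runList_layer1_isSome _ c hc

/-- The maximal layer at which `w` is ultimately safe from the layer-1 state `c`. -/
def ystarOf (A : Layered Q α d) (c : Q) (w : ℕ → α) : ℕ :=
  Nat.findGreatest (fun y => A.UltSafeFrom c y w) d

lemma ystar_spec (A : Layered Q α d) (c : Q) (w : ℕ → α) (hc : A.layer c = 1) :
    A.UltSafeFrom c (A.ystarOf c w) w := by
  have hd : 1 ≤ d := by rw [← hc]; exact A.layer_le c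
  unfold ystarOf
  exact Nat.findGreatest_spec (P := fun y => A.UltSafeFrom c y w) hd (A.ultSafe_one c hc w)

lemma ystar_max (A : Layered Q α d) (c : Q) (w : ℕ → α) {y : ℕ}
    (h : A.UltSafeFrom c y w) : y ≤ A.ystarOf c w := by
  by_contra hlt
  push_neg at hlt
  have hle : y ≤ d := by
    obtain ⟨n, pp, hp, -, -⟩ := h
    rw [← hp]; exact A.layer_le pp
  unfold ystarOf at hlt
  exact Nat.findGreatest_is_greatest hlt hle h

lemma ystar_pos (A : Layered Q α d) (c : Q) (w : ℕ → α) (hc : A.layer c = 1) :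
    1 ≤ A.ystarOf c w :=
  A.ystar_max c w (A.ultSafe_one c hc w)

lemma ystar_strongfact (A : Layered Q α d) (c : Q) (w : ℕ → α) (hc : A.layer c = 1) :
    ∃ (n₀ : ℕ) (p₀ : Q), A.layer p₀ = A.ystarOf c w ∧
      A.runList c (wordPrefix w n₀) = some (A.muHat 1 p₀) ∧
      A.SafeInf (A.layer p₀) p₀ (wordDrop w n₀) ∧
      ∀ n p', A.layer p' = A.layer p₀ + 1 →
        A.runList p₀ (wordPrefix (wordDrop w n₀) n) = some (A.μ p') →
        ¬ A.SafeInf (A.layer p') p' (wordDrop w (n₀ + n)) := by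
  obtain ⟨n₀, p₀, h1, h2, h3⟩ := A.ystar_spec c w hc
  refine ⟨n₀, p₀, h1, h2, by rw [h1]; exact h3, ?_⟩
  intro n p' hp' hrun hsafe
  have hpos := A.ystar_pos c w hc
  have hlp' : A.layer p' = A.ystarOf c w + 1 := by rw [hp', h1]
  have hult : A.UltSafeFrom c (A.ystarOf c w + 1) w := by
    refine ⟨n₀ + n, p', hlp', ?_, ?_⟩
    · rw [wordPrefix_add, runList_append, h2, Option.bind_some]
      have h4 := A.runList_muHat (x := 1) le_rfl _ _ _ hrun (A.layer_pos p₀)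
      rw [h4]
      congr 1
      exact A.muHat_mu (by omega) le_rfl (by omega)
    · rw [← hlp']
      exact hsafe
  have := A.ystar_max c w hult
  omega

lemma collide (A : Layered Q α d) (hcons : A.Consistent) (c : Q) (w : ℕ → α)
    (P₁ P₂ : Q) (n₁ n₂ : ℕ)
    (hE : Even (A.layer P₁)) (hO : Odd (A.layer P₂))
    (hb₁ : A.runList c (wordPrefix w n₁) = some (A.muHat 1 P₁))
    (hb₂ : A.runList c (wordPrefix w n₂) = some (A.muHat 1 P₂))
    (hs₁ : A.SafeInf (A.layer P₁) P₁ (wordDrop w n₁))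
    (hs₂ : A.SafeInf (A.layer P₂) P₂ (wordDrop w n₂))
    (hn₁ : ∀ n p', A.layer p' = A.layer P₁ + 1 →
      A.runList P₁ (wordPrefix (wordDrop w n₁) n) = some (A.μ p') →
      ¬ A.SafeInf (A.layer p') p' (wordDrop w (n₁ + n)))
    (hn₂ : ∀ n p', A.layer p' = A.layer P₂ + 1 →
      A.runList P₂ (wordPrefix (wordDrop w n₂) n) = some (A.μ p') →
      ¬ A.SafeInf (A.layer p') p' (wordDrop w (n₂ + n))) : False := by
  have hacc : A.StronglyAcc P₁ (wordDrop w n₁) :=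
    ⟨hE, hs₁, fun n p' h1 h2 => by rw [wordDrop_wordDrop]; exact hn₁ n p' h1 h2⟩
  have hrej : A.StronglyRej P₂ (wordDrop w n₂) :=
    ⟨hO, hs₂, fun n p' h1 h2 => by rw [wordDrop_wordDrop]; exact hn₂ n p' h1 h2⟩
  set N := max n₁ n₂ with hN
  have hk₁ : n₁ + (N - n₁) = N := by omega
  have hk₂ : n₂ + (N - n₂) = N := by omega
  obtain ⟨P₁', h₁'⟩ :=
    Option.isSome_iff_exists.mp ((A.safeInf_at_layer rfl _).mp hs₁ (N - n₁))
  obtain ⟨P₂', h₂'⟩ :=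
    Option.isSome_iff_exists.mp ((A.safeInf_at_layer rfl _).mp hs₂ (N - n₂))
  have hacc' := A.stronglyAcc_shift hacc h₁'
  have hrej' := A.stronglyRej_shift hrej h₂'
  rw [wordDrop_wordDrop, hk₁] at hacc'
  rw [wordDrop_wordDrop, hk₂] at hrej'
  have e₁ : A.runList c (wordPrefix w N) = some (A.muHat 1 P₁') := by
    rw [← hk₁, wordPrefix_add, runList_append, hb₁, Option.bind_some]
    exact A.runList_muHat le_rfl _ _ _ h₁' (A.layer_pos P₁)
  have e₂ : A.runList c (wordPrefix w N) = some (A.muHat 1 P₂') := by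
    rw [← hk₂, wordPrefix_add, runList_append, hb₂, Option.bind_some]
    exact A.runList_muHat le_rfl _ _ _ h₂' (A.layer_pos P₂)
  rw [e₁] at e₂
  exact hcons ⟨P₁', P₂', wordDrop w N, Option.some_inj.mp e₂, hacc', hrej'⟩

end Layered
namespace Layered

variable {Q α : Type} {d : ℕ}

lemma semaccept_of_even (A : Layered Q α d) (hcons : A.Consistent) {c l : Q}
    (hc : A.layer c = 1) (hl : A.muHat 1 l = c) (w : ℕ → α)
    (hEv : Even (A.ystarOf c w)) : A.SemAccept l w := by
  refine ⟨A.greedy w, fun h q a _ => A.greedyPick_semStep w _ q a, ?_⟩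
  intro ρ hrun hce
  by_contra hnp
  unfold ParityAccept at hnp
  have hOdd : Odd (minInfOften (A.runPrios w ρ)) := Nat.not_even_iff_odd.mp hnp
  have hsr := hrun.2
  have hgr : ∀ i, Odd (A.layerOf (ρ i) (w i)) → (∃ t, A.anchorCand w i (ρ i) (w i) t) →
      ∃ t, A.anchorCand w i (ρ i) (w i) t ∧ A.muHat (A.layer t) (ρ (i + 1)) = t ∧
        A.layer t ≤ A.layer (ρ (i + 1)) := by
    intro i hodd hex
    have hstep := hce i hodd
    rw [show A.greedy w (List.ofFn fun j : Fin i => (ρ (j : ℕ), w (j : ℕ))) (ρ i) (w i)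
        = A.greedyPick w i (ρ i) (w i) from by unfold greedy; rw [List.length_ofFn]] at hstep
    rw [hstep]
    exact A.greedyPick_anchor w i (ρ i) (w i) hex
  obtain ⟨m, qh, hql, hbase, hsafe, hnoesc⟩ :=
    A.greedy_strongfact w ρ (fun n => Odd n) hsr hgr hOdd
  rw [hrun.1, hl] at hbase
  obtain ⟨n₀, p₀, hp₀l, hb0, hs0, hn0⟩ := A.ystar_strongfact c w hc
  exact A.collide hcons c w p₀ qh n₀ m (by rw [hp₀l]; exact hEv) (by rw [hql]; exact hOdd)
    hb0 hbase hs0 hsafe hn0 hnoesc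

lemma not_semaccept_of_odd (A : Layered Q α d) (hcons : A.Consistent) {c l : Q}
    (hc : A.layer c = 1) (hl : A.muHat 1 l = c) (w : ℕ → α)
    (hOd : Odd (A.ystarOf c w)) : ¬ A.SemAccept l w := by
  rintro ⟨σ, hres, hwin⟩
  let g : ℕ → List (Q × α) × Q := fun n =>
    Nat.rec (([], l)) (fun i gi =>
      (gi.1 ++ [(gi.2, w i)],
        if Odd (A.layerOf gi.2 (w i)) then σ gi.1 gi.2 (w i)
        else A.greedyPick w i gi.2 (w i))) n
  let ρ : ℕ → Q := fun n => (g n).2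
  have hgs : ∀ i, ρ (i + 1) =
      (if Odd (A.layerOf (ρ i) (w i)) then σ (g i).1 (ρ i) (w i)
       else A.greedyPick w i (ρ i) (w i)) := fun i => rfl
  have hhist : ∀ i, (g i).1 = List.ofFn (fun j : Fin i => (ρ (j : ℕ), w (j : ℕ))) := by
    intro i
    induction i with
    | zero => rw [List.ofFn_zero]; rfl
    | succ i ih =>
      have e1 : (g (i + 1)).1 = (g i).1 ++ [(ρ i, w i)] := rfl
      have e2 : (List.ofFn fun j : Fin (i + 1) => (ρ (j : ℕ), w (j : ℕ)))
          = (List.ofFn fun j : Fin i => (ρ (j : ℕ), w (j : ℕ))) ++ [(ρ i, w i)] := by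
        rw [List.ofFn_succ', List.concat_eq_append]
        rfl
      rw [e1, ih, e2]
  have hsr : ∀ i, A.semStep (ρ i) (w i) (ρ (i + 1)) := by
    intro i
    rw [hgs i]
    split_ifs with h
    · exact hres _ _ _ h
    · exact A.greedyPick_semStep w i _ _
  have hce : A.ConsEve σ w ρ := by
    intro i hodd
    have hodd' : Odd (A.layerOf (ρ i) (w i)) := hodd
    rw [hgs i, if_pos hodd', hhist i]
  have hpar := hwin ρ ⟨rfl, hsr⟩ hce
  unfold ParityAccept at hpar
  have hgr : ∀ i, Even (A.layerOf (ρ i) (w i)) → (∃ t, A.anchorCand w i (ρ i) (w i) t) →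
      ∃ t, A.anchorCand w i (ρ i) (w i) t ∧ A.muHat (A.layer t) (ρ (i + 1)) = t ∧
        A.layer t ≤ A.layer (ρ (i + 1)) := by
    intro i hev hex
    rw [hgs i, if_neg (by rw [Nat.not_odd_iff_even]; exact hev)]
    exact A.greedyPick_anchor w i (ρ i) (w i) hex
  obtain ⟨m, qh, hql, hbase, hsafe, hnoesc⟩ :=
    A.greedy_strongfact w ρ (fun n => Even n) hsr hgr hpar
  have hρ0 : ρ 0 = l := rfl
  rw [hρ0, hl] at hbase
  obtain ⟨n₀, p₀, hp₀l, hb0, hs0, hn0⟩ := A.ystar_strongfact c w hc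
  exact A.collide hcons c w qh p₀ m n₀ (by rw [hql]; exact hpar) (by rw [hp₀l]; exact hOd)
    hbase hb0 hsafe hs0 hnoesc hn0

lemma langEq1_of_cobased (A : Layered Q α d) (hcons : A.Consistent) (p q : Q)
    (hpq : A.muHat 1 p = A.muHat 1 q) : A.LangEq1 p q := by
  intro l l' hll hll' hml hml' w
  have hc : A.layer (A.muHat 1 p) = 1 := A.muHat_layer le_rfl (A.layer_pos p)
  have hml'' : A.muHat 1 l' = A.muHat 1 p := by rw [hml', ← hpq]
  by_cases hE : Even (A.ystarOf (A.muHat 1 p) w)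
  · constructor <;> intro _
    · exact A.semaccept_of_even hcons hc hml'' w hE
    · exact A.semaccept_of_even hcons hc hml w hE
  · have hO : Odd (A.ystarOf (A.muHat 1 p) w) := Nat.not_even_iff_odd.mp hE
    constructor <;> intro h
    · exact absurd h (A.not_semaccept_of_odd hcons hc hml w hO)
    · exact absurd h (A.not_semaccept_of_odd hcons hc hml'' w hO)

lemma eq_of_sibling_safe_eq (A : Layered Q α d) (hcons : A.Consistent)
    (hmin : A.SafeMinimal) (p q : Q) (hx : 2 ≤ A.layer p)
    (hlay : A.layer q = A.layer p)
    (hmu : A.muHat (A.layer p - 1) q = A.muHat (A.layer p - 1) p)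
    (hfin : ∀ u, (A.runList p u).isSome ↔ (A.runList q u).isSome) : p = q := by
  have hmu1 : A.muHat 1 p = A.muHat 1 q := by
    have e1 : A.muHat 1 p = A.muHat 1 (A.muHat (A.layer p - 1) p) :=
      (A.muHat_muHat le_rfl (by omega) (by omega)).symm
    have e2 : A.muHat 1 q = A.muHat 1 (A.muHat (A.layer p - 1) q) :=
      (A.muHat_muHat le_rfl (by omega) (by omega : A.layer p - 1 ≤ A.layer q)).symm
    rw [e1, e2, hmu]
  apply hmin p q hlay.symm
  refine ⟨A.langEq1_of_cobased hcons p q hmu1, ?_⟩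
  intro y hy2 hyx
  have hiff : ∀ u, (A.SafeFin y p u ↔ A.SafeFin y q u) := by
    intro u
    by_cases hylt : y ≤ A.layer p - 1
    · have e : A.muHat y p = A.muHat y q := by
        rw [← A.muHat_muHat (by omega) hylt (by omega : A.layer p - 1 ≤ A.layer p),
            ← A.muHat_muHat (by omega) hylt (by omega : A.layer p - 1 ≤ A.layer q), hmu]
      unfold SafeFin
      rw [e]
    · have hyeq : y = A.layer p := by omega
      subst hyeq
      rw [A.safeFin_at_layer rfl, A.safeFin_at_layer hlay]
      exact hfin u
  exact ⟨hiff, fun w => ⟨fun h n => (hiff _).mp (h n), fun h n => (hiff _).mpr (h n)⟩⟩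

end Layered
namespace Layered

variable {Q α : Type} {d : ℕ}

lemma sibling_transport (A : Layered Q α d) {p r r₂ : Q} {u : List α} (hx : 2 ≤ A.layer p)
    (hup : A.runList p u = some p) (hr : A.runList r u = some r₂)
    (hmu : A.muHat (A.layer p - 1) r = A.muHat (A.layer p - 1) p)
    (hrl : A.layer p - 1 ≤ A.layer r) :
    A.muHat (A.layer p - 1) r₂ = A.muHat (A.layer p - 1) p := by
  have h1 := A.runList_muHat (x := A.layer p - 1) (by omega) _ _ _ hr hrl
  have h2 := A.runList_muHat (x := A.layer p - 1) (by omega) _ _ _ hup (by omega)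
  rw [hmu, h2] at h1
  exact (Option.some_inj.mp h1).symm

lemma resolve_sibling [Fintype Q] (A : Layered Q α d) (hcons : A.Consistent)
    (hnorm : A.NormalForm) (hcent : A.Centralised) (hmin : A.SafeMinimal)
    (p q : Q) (hx : 2 ≤ A.layer p) (hlay : A.layer q = A.layer p)
    (hmu : A.muHat (A.layer p - 1) q = A.muHat (A.layer p - 1) p) :
    ∃ u, A.runList p u = some p ∧ (A.runList q u = some p ∨ A.runList q u = none) := by
  have hN1 := (hnorm p hx).1
  by_cases hC : ∀ u, (A.runList p u).isSome → (A.runList q u).isSome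
  · have hSLE : A.SafeLE (A.layer p) p q := by
      constructor
      · intro u hu
        rw [A.safeFin_at_layer rfl] at hu
        rw [A.safeFin_at_layer hlay]
        exact hC u hu
      · intro w hw n
        have h0 := hw n
        rw [A.safeFin_at_layer rfl] at h0
        rw [A.safeFin_at_layer hlay]
        exact hC _ h0
    obtain ⟨⟨w₁, hw₁⟩, -⟩ := hcent p q hx hlay hmu.symm hSLE
    by_contra hres
    push_neg at hres
    let un : ℕ → List α := fun n => Nat.rec ([] : List α) (fun _ u => w₁ ++ u) n
    have hun0 : un 0 = [] := rfl
    have hunS : ∀ n, un (n + 1) = w₁ ++ un n := fun n => rfl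
    have halive : ∀ n, (A.runList p (un n)).isSome := by
      intro n
      induction n with
      | zero => rw [hun0]; rfl
      | succ n ih =>
        rw [hunS, runList_append, hw₁, Option.bind_some]
        exact hC _ ih
    choose z hz using fun n => Option.isSome_iff_exists.mp (halive n)
    have hznext : ∀ n, A.runList q (un n) = some (z (n + 1)) := by
      intro n
      have h1 := hz (n + 1)
      rw [hunS, runList_append, hw₁, Option.bind_some] at h1
      exact h1
    have hneq : ∀ n, z n ≠ z (n + 1) := by
      intro n heq
      obtain ⟨v, -, hv⟩ := hN1 (un n) (z n) (hz n)
      have h1 : A.runList p (un n ++ v) = some p := by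
        rw [runList_append, hz n, Option.bind_some]; exact hv
      have h2 : A.runList q (un n ++ v) = some p := by
        rw [runList_append, hznext n, Option.bind_some, ← heq]; exact hv
      exact (hres _ h1).1 h2
    have hincl : ∀ n v, (A.runList (z n) v).isSome → (A.runList (z (n + 1)) v).isSome := by
      intro n v hv
      have h1 : (A.runList p (un n ++ v)).isSome := by
        rw [runList_append, hz n, Option.bind_some]; exact hv
      have h2 := hC _ h1
      rwa [runList_append, hznext n, Option.bind_some] at h2
    have hzlay : ∀ n, A.layer (z n) = A.layer p := fun n => A.runList_layer _ _ _ (hz n)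
    have hsib : ∀ n, A.muHat (A.layer p - 1) (z n) = A.muHat (A.layer p - 1) p := by
      intro n
      induction n with
      | zero =>
        have h0 : z 0 = p := by
          have := hz 0; rw [hun0] at this
          exact (Option.some_inj.mp this).symm
        rw [h0]
      | succ n ih =>
        have h1 := A.runList_muHat (x := A.layer p - 1) (by omega) _ _ _ (hznext n)
          (by omega : A.layer p - 1 ≤ A.layer q)
        have h2 := A.runList_muHat (x := A.layer p - 1) (by omega) _ _ _ (hz n) (by omega)
        rw [hmu] at h1
        rw [ih] at h2
        rw [h2] at h1
        exact Option.some_inj.mp h1.symm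
    have hwit : ∀ n, ∃ v, (A.runList (z (n + 1)) v).isSome ∧ ¬ (A.runList (z n) v).isSome := by
      intro n
      by_contra hcon
      push_neg at hcon
      refine hneq n (A.eq_of_sibling_safe_eq hcons hmin (z n) (z (n + 1)) ?_ ?_ ?_ ?_)
      · rw [hzlay n]; exact hx
      · rw [hzlay n, hzlay (n + 1)]
      · rw [hzlay n]
        rw [hsib (n + 1), hsib n]
      · intro u
        exact ⟨hincl n u, hcon u⟩
    have hmono : ∀ m n, m ≤ n → ∀ v, (A.runList (z m) v).isSome → (A.runList (z n) v).isSome := by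
      intro m n h
      refine Nat.le_induction (fun v hv => hv) (fun k _ ih v hv => hincl k v (ih v hv)) n h
    have hinj : Function.Injective z := by
      intro m n hzeq
      by_contra hne
      have hlt : ∀ m' n', m' < n' → z m' ≠ z n' := by
        intro m' n' hmn heq
        obtain ⟨v, hv1, hv2⟩ := hwit m'
        have h3 := hmono (m' + 1) n' hmn v hv1
        rw [← heq] at h3
        exact hv2 h3
      rcases Nat.lt_trichotomy m n with h | h | h
      · exact hlt m n h hzeq
      · exact hne h
      · exact hlt n m h hzeq.symm
    have : Finite ℕ := Finite.of_injective z hinj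
    exact not_finite ℕ
  · push_neg at hC
    obtain ⟨u, hu, hqu⟩ := hC
    have hqu' : A.runList q u = none := Option.not_isSome_iff_eq_none.mp hqu
    obtain ⟨t, ht⟩ := Option.isSome_iff_exists.mp hu
    obtain ⟨v, -, hv⟩ := hN1 u t ht
    refine ⟨u ++ v, ?_, Or.inr ?_⟩
    · rw [runList_append, ht, Option.bind_some]; exact hv
    · rw [runList_append, hqu', Option.bind_none]

lemma kill_grandchild [Fintype Q] (A : Layered Q α d) (hcons : A.Consistent)
    (hnorm : A.NormalForm) (hcent : A.Centralised) (hmin : A.SafeMinimal)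
    (p g : Q) (hx : 2 ≤ A.layer p) (hg : A.layer g = A.layer p + 1)
    (hmu : A.muHat (A.layer p - 1) g = A.muHat (A.layer p - 1) p) :
    ∃ u, A.runList p u = some p ∧ A.runList g u = none := by
  have hgl1 : 1 < A.layer g := by omega
  have hql : A.layer (A.μ g) = A.layer p := by
    have := A.μ_layer g hgl1; omega
  have hqmu : A.muHat (A.layer p - 1) (A.μ g) = A.muHat (A.layer p - 1) p := by
    rw [A.muHat_mu hgl1 (by omega) (by omega : A.layer p - 1 ≤ A.layer g - 1)]
    exact hmu
  obtain ⟨u₀, hu₀p, hu₀q⟩ := A.resolve_sibling hcons hnorm hcent hmin p (A.μ g) hx hql hqmu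
  have hproj : ∀ (v : List α) (g₂ : Q), A.runList g v = some g₂ →
      A.runList (A.μ g) v = some (A.μ g₂) := by
    intro v g₂ hv
    have h1 := A.runList_muHat (x := A.layer p) (by omega) _ _ _ hv (by omega)
    rwa [A.muHat_succ_self hg,
      A.muHat_succ_self (by rw [A.runList_layer _ _ _ hv]; exact hg)] at h1
  rcases hu₀q with hqp | hdead
  · cases hgu : A.runList g u₀ with
    | none => exact ⟨u₀, hu₀p, hgu⟩
    | some g₂ =>
      have hμg₂ : A.μ g₂ = p := by
        have h0 := hproj _ _ hgu
        rw [hqp] at h0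
        exact (Option.some_inj.mp h0).symm
      have hg₂ : A.layer g₂ = A.layer p + 1 := by
        rw [A.runList_layer _ _ _ hgu]; exact hg
      obtain ⟨v, hvp, hvg⟩ := (hnorm p hx).2 g₂ (by omega) hμg₂
      obtain ⟨t, htv⟩ := Option.isSome_iff_exists.mp hvp
      obtain ⟨r, -, hr⟩ := (hnorm p hx).1 v t htv
      refine ⟨u₀ ++ (v ++ r), ?_, ?_⟩
      · rw [runList_append, hu₀p, Option.bind_some, runList_append, htv, Option.bind_some]
        exact hr
      · rw [runList_append, hgu, Option.bind_some, runList_append, hvg, Option.bind_none]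
  · cases hgu : A.runList g u₀ with
    | none => exact ⟨u₀, hu₀p, hgu⟩
    | some g₂ =>
      have h0 := hproj _ _ hgu
      rw [hdead] at h0
      exact absurd h0 (by simp)

lemma kill_all_grandchildren [Fintype Q] (A : Layered Q α d) (hcons : A.Consistent)
    (hnorm : A.NormalForm) (hcent : A.Centralised) (hmin : A.SafeMinimal)
    (p : Q) (hx : 2 ≤ A.layer p) :
    ∀ (L : List Q), (∀ g ∈ L, A.layer g = A.layer p + 1 ∧
        A.muHat (A.layer p - 1) g = A.muHat (A.layer p - 1) p) →
      ∃ u, A.runList p u = some p ∧ ∀ g ∈ L, A.runList g u = none := by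
  intro L
  induction L with
  | nil => exact fun _ => ⟨[], rfl, by simp⟩
  | cons g L ih =>
    intro hall
    obtain ⟨u, hup, hL⟩ := ih (fun g' hg' => hall g' (List.mem_cons_of_mem g hg'))
    obtain ⟨hglay, hgmu⟩ := hall g (List.mem_cons_self (a := g) (l := L))
    cases hgu : A.runList g u with
    | none =>
      refine ⟨u, hup, ?_⟩
      intro g' hg'
      rcases List.mem_cons.mp hg' with rfl | hmem
      exacts [hgu, hL g' hmem]
    | some g₂ =>
      have hg₂lay : A.layer g₂ = A.layer p + 1 := by
        rw [A.runList_layer _ _ _ hgu]; exact hglay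
      have hg₂mu := A.sibling_transport hx hup hgu hgmu (by omega)
      obtain ⟨v, hvp, hvg⟩ := A.kill_grandchild hcons hnorm hcent hmin p g₂ hx hg₂lay hg₂mu
      refine ⟨u ++ v, ?_, ?_⟩
      · rw [runList_append, hup, Option.bind_some]; exact hvp
      · intro g' hg'
        rcases List.mem_cons.mp hg' with rfl | hmem
        · rw [runList_append, hgu, Option.bind_some]; exact hvg
        · rw [runList_append, hL g' hmem, Option.bind_none]

lemma resolve_all_siblings [Fintype Q] (A : Layered Q α d) (hcons : A.Consistent)
    (hnorm : A.NormalForm) (hcent : A.Centralised) (hmin : A.SafeMinimal)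
    (p : Q) (hx : 2 ≤ A.layer p) :
    ∀ (L : List Q), (∀ q ∈ L, A.layer q = A.layer p ∧
        A.muHat (A.layer p - 1) q = A.muHat (A.layer p - 1) p) →
      ∀ u₁, A.runList p u₁ = some p →
        ∃ v, A.runList p (u₁ ++ v) = some p ∧
          ∀ q ∈ L, (A.runList q (u₁ ++ v) = some p ∨ A.runList q (u₁ ++ v) = none) := by
  intro L
  induction L with
  | nil => exact fun _ u₁ hu₁ => ⟨[], by simpa using hu₁, by simp⟩
  | cons q L ih =>
    intro hall u₁ hu₁
    obtain ⟨hqlay, hqmu⟩ := hall q (List.mem_cons_self (a := q) (l := L))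
    have hstep : ∃ v₁, A.runList p (u₁ ++ v₁) = some p ∧
        (A.runList q (u₁ ++ v₁) = some p ∨ A.runList q (u₁ ++ v₁) = none) := by
      cases hqu : A.runList q u₁ with
      | none =>
        exact ⟨[], by simpa using hu₁, Or.inr (by simpa using hqu)⟩
      | some q₂ =>
        have hq₂lay : A.layer q₂ = A.layer p := by
          rw [A.runList_layer _ _ _ hqu]; exact hqlay
        have hq₂mu := A.sibling_transport hx hu₁ hqu hqmu (by omega)
        obtain ⟨v₁, hv₁p, hv₁q⟩ := A.resolve_sibling hcons hnorm hcent hmin p q₂ hx hq₂lay hq₂mu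
        refine ⟨v₁, ?_, ?_⟩
        · rw [runList_append, hu₁, Option.bind_some]; exact hv₁p
        · rcases hv₁q with h | h
          · exact Or.inl (by rw [runList_append, hqu, Option.bind_some]; exact h)
          · exact Or.inr (by rw [runList_append, hqu, Option.bind_some]; exact h)
    obtain ⟨v₁, hv₁p, hv₁q⟩ := hstep
    obtain ⟨v₂, hv₂p, hv₂L⟩ :=
      ih (fun q' hq' => hall q' (List.mem_cons_of_mem q hq')) (u₁ ++ v₁) hv₁p
    refine ⟨v₁ ++ v₂, by rw [← List.append_assoc]; exact hv₂p, ?_⟩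
    intro q' hq'
    rcases List.mem_cons.mp hq' with rfl | hmem
    · have hpv₂ : A.runList p v₂ = some p := by
        have h0 := hv₂p
        rw [runList_append, hv₁p, Option.bind_some] at h0
        exact h0
      rw [← List.append_assoc]
      rcases hv₁q with h | h
      · exact Or.inl (by rw [runList_append, h, Option.bind_some]; exact hpv₂)
      · exact Or.inr (by rw [runList_append, h, Option.bind_none])
    · rw [← List.append_assoc]
      exact hv₂L q' hmem

end Layered

end Aux12
/-- In a consistent layered automaton that is in normal form,
centralised and safe minimal, every state of a layer `x ≥ 2` admits a central sequence. -/
theorem statement_12 {Q α : Type} [Fintype Q] [Fintype α] [Nonempty α] {d : ℕ}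
    (A : Layered Q α d) (hcons : A.Consistent) (hnorm : A.NormalForm)
    (hcent : A.Centralised) (hmin : A.SafeMinimal) :
    ∀ p : Q, 2 ≤ A.layer p → ∃ z : List α, A.IsCentralSeq p z := by
  intro p hx
  classical
  obtain ⟨u₁, hu₁p, hu₁G⟩ := A.kill_all_grandchildren hcons hnorm hcent hmin p hx
    ((Finset.univ.filter (fun g => A.layer g = A.layer p + 1 ∧
      A.muHat (A.layer p - 1) g = A.muHat (A.layer p - 1) p)).toList)
    (by
      intro g hg
      rw [Finset.mem_toList, Finset.mem_filter] at hg
      exact hg.2)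
  obtain ⟨v, hvp, hvS⟩ := A.resolve_all_siblings hcons hnorm hcent hmin p hx
    ((Finset.univ.filter (fun q => A.layer q = A.layer p ∧
      A.muHat (A.layer p - 1) q = A.muHat (A.layer p - 1) p)).toList)
    (by
      intro q hq
      rw [Finset.mem_toList, Finset.mem_filter] at hq
      exact hq.2)
    u₁ hu₁p
  obtain ⟨v₂, hv₂ne, hv₂⟩ := (hnorm p hx).1 (u₁ ++ v) p hvp
  refine ⟨(u₁ ++ v) ++ v₂, ?_, ?_, ?_, ?_⟩
  · intro hcontra
    rcases List.append_eq_nil_iff.mp hcontra with ⟨-, h2⟩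
    exact hv₂ne h2
  · rw [Layered.runList_append, hvp, Option.bind_some]; exact hv₂
  · intro q hq1 hq2
    have hmem : q ∈ (Finset.univ.filter (fun q => A.layer q = A.layer p ∧
        A.muHat (A.layer p - 1) q = A.muHat (A.layer p - 1) p)).toList := by
      rw [Finset.mem_toList, Finset.mem_filter]
      exact ⟨Finset.mem_univ q, hq1, hq2⟩
    rcases hvS q hmem with h | h
    · exact Or.inl (by rw [Layered.runList_append, h, Option.bind_some]; exact hv₂)
    · exact Or.inr (by rw [Layered.runList_append, h, Option.bind_none])
  · intro g hg1 hg2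
    have hmem : g ∈ (Finset.univ.filter (fun g => A.layer g = A.layer p + 1 ∧
        A.muHat (A.layer p - 1) g = A.muHat (A.layer p - 1) p)).toList := by
      rw [Finset.mem_toList, Finset.mem_filter]
      exact ⟨Finset.mem_univ g, hg1, hg2⟩
    have hdead : A.runList g (u₁ ++ v) = none := by
      rw [Layered.runList_append, hu₁G g hmem, Option.bind_none]
    rw [Layered.runList_append, hdead, Option.bind_none]
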